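/- The determinant of the r×r matrix G with G₀₀ = (p−1)/2, G₀ⱼ = Gⱼ₀ = −1 for j ≥ 1, Gⱼⱼ = p−2 for j ≥ 1, and Gᵢⱼ = −2 for distinct i, j ≥ 1, where r = (p−1)/2 and p ≥ 5 is prime, equals p^{(p−3)/2}, the discriminant of Q(ζ_p + ζ_p⁻¹). -/

import Mathlib

section Aux

def E1mat (r : ℕ) : Matrix (Fin r) (Fin r) ℤ :=
  Matrix.of fun i j => if i = j then 1 else if (i : ℕ) = 0 then 1 else 0

def E2mat (r : ℕ) : Matrix (Fin r) (Fin r) ℤ :=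
  Matrix.of fun i j => if i = j then 1 else if (j : ℕ) = 0 then 1 else 0

def Mmat (p r : ℕ) : Matrix (Fin r) (Fin r) ℤ :=
  Matrix.of fun i j => if (i : ℕ) = 0 then (if (j : ℕ) = 0 then 1 else 2)
    else if i = j then (p : ℤ) else 0

lemma detE1 (r : ℕ) : (E1mat r).det = 1 := by
  rw [Matrix.det_of_upperTriangular (M := E1mat r)]
  · simp [E1mat]
  · intro i j hij
    simp only [E1mat, Matrix.of_apply]
    have h1 : ¬ i = j := by intro h; subst h; exact lt_irrefl _ hij
    have h2 : ¬ (i : ℕ) = 0 := by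
      have : (j : ℕ) < (i : ℕ) := hij
      omega
    simp [h1, h2]

lemma detE2 (r : ℕ) : (E2mat r).det = 1 := by
  rw [Matrix.det_of_lowerTriangular (E2mat r)]
  · simp [E2mat]
  · intro i j hij
    simp only [E2mat, Matrix.of_apply]
    have h1 : ¬ i = j := by intro h; subst h; exact lt_irrefl _ hij
    have h2 : ¬ (j : ℕ) = 0 := by
      have : (i : ℕ) < (j : ℕ) := hij
      omega
    simp [h1, h2]

lemma detM (p r' : ℕ) : (Mmat p (r' + 1)).det = (p : ℤ) ^ r' := by
  rw [Matrix.det_of_upperTriangular (M := Mmat p (r' + 1))]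
  · rw [Fin.prod_univ_succ]
    have h1 : Mmat p (r' + 1) 0 0 = 1 := by simp [Mmat]
    have h2 : ∀ i : Fin r', Mmat p (r' + 1) i.succ i.succ = (p : ℤ) := fun i => by
      simp [Mmat, Fin.val_succ]
    rw [h1, one_mul, Finset.prod_congr rfl (fun i _ => h2 i), Finset.prod_const]
    simp
  · intro i j hij
    have h1 : ¬ i = j := by intro h; subst h; exact lt_irrefl _ hij
    have h2 : ¬ (i : ℕ) = 0 := by
      have : (j : ℕ) < (i : ℕ) := hij
      omega
    have h2' : i ≠ 0 := fun h => h2 (by simp [h])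
    simp [Mmat, h1, h2, h2']

end Aux

/-- For a prime `p ≥ 5` and `r = (p−1)/2`, the determinant of the `r×r`
matrix `G` with `G₀₀ = (p−1)/2`, `G₀ⱼ = Gⱼ₀ = −1`, `Gⱼⱼ = p−2` (`j ≥ 1`) and
`Gᵢⱼ = −2` for distinct `i, j ≥ 1` equals `p^{(p−3)/2}`, the discriminant of
`ℚ(ζ_p + ζ_p⁻¹)`. -/
theorem stmt14 (p r : ℕ) (hp : p.Prime) (hp5 : 5 ≤ p) (hr : r = (p - 1) / 2)
    (G : Matrix (Fin r) (Fin r) ℤ)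
    (hG : ∀ i j : Fin r,
      G i j = if (i : ℕ) = 0 ∧ (j : ℕ) = 0 then ((p : ℤ) - 1) / 2
        else if (i : ℕ) = 0 ∨ (j : ℕ) = 0 then -1
        else if i = j then (p : ℤ) - 2
        else -2) :
    G.det = (p : ℤ) ^ ((p - 3) / 2) := by
  have hodd : p % 2 = 1 := Nat.odd_iff.mp (hp.odd_of_ne_two (by omega))
  have h2r : 2 * r = p - 1 := by omega
  have hr2 : 2 ≤ r := by omega
  have hr0 : 0 < r := by omega
  set z : Fin r := ⟨0, hr0⟩ with hz
  have hzval : (z : ℕ) = 0 := rfl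
  have hpz : ((p : ℤ) - 1) / 2 = (r : ℤ) := by omega
  -- the intermediate matrix G1
  set G1 : Matrix (Fin r) (Fin r) ℤ := Matrix.of fun i j =>
    if (i : ℕ) = 0 then (if (j : ℕ) = 0 then 1 else 2) else G i j with hG1
  have hval0 : ∀ i : Fin r, (i : ℕ) = 0 ↔ i = z := by
    intro i; constructor
    · intro h; exact Fin.ext h
    · intro h; subst h; rfl
  -- step 1 : E1 * G = G1
  have step1 : E1mat r * G = G1 := by
    ext i j
    rw [Matrix.mul_apply]
    by_cases hi : (i : ℕ) = 0
    · have hiz : i = z := (hval0 i).mp hi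
      have hE1row : ∀ k : Fin r, E1mat r i k = 1 := by
        intro k
        simp [E1mat, hi]
      simp only [hE1row, one_mul]
      by_cases hj : (j : ℕ) = 0
      · have hjz : j = z := (hval0 j).mp hj
        have hGk : ∀ k : Fin r, G k j = (if k = z then ((p : ℤ) - 1) / 2 + 1 else 0) - 1 := by
          intro k
          rw [hG]
          by_cases hk : (k : ℕ) = 0
          · rw [if_pos ⟨hk, hj⟩, if_pos ((hval0 k).mp hk)]; ring
          · rw [if_neg (by tauto), if_pos (Or.inr hj),
              if_neg (fun h : k = z => hk ((hval0 k).mpr h))]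
            ring
        rw [Finset.sum_congr rfl (fun k _ => hGk k)]
        rw [Finset.sum_sub_distrib, Finset.sum_ite_eq', if_pos (Finset.mem_univ z)]
        simp only [Finset.sum_const, Finset.card_univ, Fintype.card_fin, nsmul_eq_mul, mul_one]
        have hRHS : G1 i j = 1 := by simp [hG1, hi, hj]
        rw [hRHS, hpz]; ring
      · have hjz : ¬ j = z := fun h => hj ((hval0 j).mpr h ▸ rfl)
        have hGk : ∀ k : Fin r, G k j =
            ((if k = z then (1 : ℤ) else 0) + (if k = j then (p : ℤ) else 0)) + (-2) := by
          intro k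
          rw [hG]
          by_cases hk : (k : ℕ) = 0
          · have hkz : k = z := (hval0 k).mp hk
            rw [if_neg (by tauto), if_pos (Or.inl hk), if_pos hkz,
              if_neg (by rw [hkz]; exact fun h => hjz h.symm)]
            ring
          · have hkz : ¬ k = z := fun h => hk ((hval0 k).mpr h)
            rw [if_neg (by tauto), if_neg (by tauto), if_neg hkz]
            by_cases hkj : k = j
            · rw [if_pos hkj, if_pos hkj]; ring
            · rw [if_neg hkj, if_neg hkj]; ring
        rw [Finset.sum_congr rfl (fun k _ => hGk k)]
        rw [Finset.sum_add_distrib, Finset.sum_add_distrib, Finset.sum_ite_eq',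
          Finset.sum_ite_eq', if_pos (Finset.mem_univ z), if_pos (Finset.mem_univ j)]
        simp only [Finset.sum_const, Finset.card_univ, Fintype.card_fin, nsmul_eq_mul, mul_one]
        have hRHS : G1 i j = 2 := by simp [hG1, hi, hj]
        have hmul : (r : ℤ) * (-2) = -((p : ℤ) - 1) := by omega
        rw [hRHS, hmul]; ring
    · have hE1row : ∀ k : Fin r, E1mat r i k = if k = i then 1 else 0 := by
        intro k
        simp only [E1mat, Matrix.of_apply]
        by_cases hk : i = k
        · subst hk; simp
        · rw [if_neg hk, if_neg hi, if_neg (fun h => hk h.symm)]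
      simp only [hE1row, ite_mul, one_mul, zero_mul]
      rw [Finset.sum_ite_eq', if_pos (Finset.mem_univ i)]
      simp [hG1, hi]
  -- step 2 : E2 * G1 = Mmat
  have step2 : E2mat r * G1 = Mmat p r := by
    ext i j
    rw [Matrix.mul_apply]
    by_cases hi : (i : ℕ) = 0
    · have hiz : i = z := (hval0 i).mp hi
      have hE2row : ∀ k : Fin r, E2mat r i k = if k = i then 1 else 0 := by
        intro k
        simp only [E2mat, Matrix.of_apply]
        by_cases hk : k = i
        · rw [hk, if_pos rfl, if_pos rfl]
        · have hk0 : ¬ (k : ℕ) = 0 := by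
            intro h
            exact hk (((hval0 k).mp h).trans hiz.symm)
          rw [if_neg (fun h : i = k => hk h.symm), if_neg hk0, if_neg hk]
      simp only [hE2row, ite_mul, one_mul, zero_mul]
      rw [Finset.sum_ite_eq', if_pos (Finset.mem_univ i)]
      simp [hG1, Mmat, hi]
    · have hiz : ¬ i = z := fun h => hi ((hval0 i).mpr h ▸ rfl)
      have hterm : ∀ k : Fin r, E2mat r i k * G1 k j =
          (if k = i then G1 i j else 0) + (if k = z then G1 z j else 0) := by
        intro k
        by_cases hk : k = i
        · have hL : E2mat r i k = 1 := by
            simp only [E2mat, Matrix.of_apply]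
            rw [if_pos hk.symm]
          rw [hL, one_mul, hk, if_pos rfl, if_neg hiz, add_zero]
        · by_cases hkz : k = z
          · have hL : E2mat r i k = 1 := by
              simp only [E2mat, Matrix.of_apply]
              rw [if_neg (fun h : i = k => hk h.symm), if_pos ((hval0 k).mpr hkz)]
            rw [hL, one_mul, hkz, if_neg (fun h : z = i => hiz h.symm), if_pos rfl, zero_add]
          · have hL : E2mat r i k = 0 := by
              simp only [E2mat, Matrix.of_apply]
              rw [if_neg (fun h : i = k => hk h.symm),
                if_neg (fun h : (k : ℕ) = 0 => hkz ((hval0 k).mp h))]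
            rw [hL, zero_mul, if_neg hk, if_neg hkz, add_zero]
      rw [Finset.sum_congr rfl (fun k _ => hterm k)]
      rw [Finset.sum_add_distrib, Finset.sum_ite_eq', Finset.sum_ite_eq',
        if_pos (Finset.mem_univ i), if_pos (Finset.mem_univ z)]
      have hG1z : G1 z j = if (j : ℕ) = 0 then 1 else 2 := by simp [hG1, hzval]
      have hG1i : G1 i j = G i j := by simp [hG1, hi]
      rw [hG1z, hG1i, hG i j]
      have hMij : Mmat p r i j = if i = j then (p : ℤ) else 0 := by
        simp only [Mmat, Matrix.of_apply]
        rw [if_neg hi]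
      rw [hMij]
      by_cases hj : (j : ℕ) = 0
      · have hij : ¬ i = j := fun h => hi (h ▸ hj)
        rw [if_neg (fun h : (i : ℕ) = 0 ∧ (j : ℕ) = 0 => hi h.1), if_pos (Or.inr hj),
          if_pos hj, if_neg hij]
        ring
      · have h1 : ¬ ((i : ℕ) = 0 ∧ (j : ℕ) = 0) := fun h => hj h.2
        have h2 : ¬ ((i : ℕ) = 0 ∨ (j : ℕ) = 0) := fun h => h.elim hi hj
        rw [if_neg h1, if_neg h2, if_neg hj]
        by_cases hij : i = j
        · rw [if_pos hij, if_pos hij]; ring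
        · rw [if_neg hij, if_neg hij]; ring
  -- combine
  have hdet : (E2mat r).det * ((E1mat r).det * G.det) = (Mmat p r).det := by
    rw [← Matrix.det_mul, ← Matrix.det_mul, step1, step2]
  rw [detE1, detE2, one_mul, one_mul] at hdet
  obtain ⟨r', rfl⟩ : ∃ r', r = r' + 1 := ⟨r - 1, by omega⟩
  rw [hdet, detM]
  congr 1
  omega
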